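/- arXiv:1303.2902 — 3 statements merged into one kernel-verified Lean document; each statement's English description precedes it below -/
import Mathlib

section
/- If B : ℝ → ℝ is convex and twice differentiable, then for any ρ^{k-1}, ρ^k ∈ ℝ and Δt > 0, B'(ρ^k)·(ρ^k − ρ^{k-1}) ≥ B(ρ^k) − B(ρ^{k-1}). Consequently, for a sequence satisfying the implicit continuity scheme multiplied by B'(ρ_i^k), the discrete quantity Σ_i B(ρ_i^m)Δx is bounded by Σ_i B(ρ_i^0)Δx minus the accumulated flux term. -/
open Finset

private lemma abel_aux (A F : ℕ → ℝ) (n : ℕ) :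
    ∑ i ∈ range (n+1), A i * (F (i+1) - F i)
      = A n * F (n+1) - A 0 * F 0 - ∑ i ∈ range n, (A (i+1) - A i) * F (i+1) := by
  induction n with
  | zero => simp; ring
  | succ n ih => rw [Finset.sum_range_succ, ih, Finset.sum_range_succ]; ring

private lemma tangent_ineq (B : ℝ → ℝ) (hconv : ConvexOn ℝ Set.univ B)
    (hdiff : ∀ x : ℝ, DifferentiableAt ℝ B x) (ρ0 ρ1 : ℝ) :
    B ρ1 - B ρ0 ≤ deriv B ρ1 * (ρ1 - ρ0) := by
  rcases lt_trichotomy ρ0 ρ1 with h | h | h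
  · have hs := hconv.slope_le_deriv (Set.mem_univ ρ0) (Set.mem_univ ρ1) h (hdiff ρ1)
    rw [slope_def_field] at hs
    have h1 : (0:ℝ) < ρ1 - ρ0 := by linarith
    rw [div_le_iff₀ h1] at hs
    linarith [hs]
  · subst h; simp
  · have hs := hconv.deriv_le_slope (Set.mem_univ ρ1) (Set.mem_univ ρ0) h (hdiff ρ1)
    rw [slope_def_field] at hs
    have h1 : (0:ℝ) < ρ0 - ρ1 := by linarith
    rw [le_div_iff₀ h1] at hs
    nlinarith [hs]

/-- Convexity inequality `B'(ρᵏ)(ρᵏ-ρᵏ⁻¹) ≥ B(ρᵏ)-B(ρᵏ⁻¹)` for convex twice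
differentiable `B`, and its consequence for the implicit upwind continuity scheme:
the discrete quantity `Σᵢ B(ρᵢᵐ)Δx` is bounded by `Σᵢ B(ρᵢ⁰)Δx` minus the accumulated
flux term `Δt Δx Σ_{k≤m} Σᵢ b(ρᵢᵏ)·∂ᵢuᵏ`, where `b(z) = zB'(z)-B(z)`.
Here `u k j` is the face velocity `u_{j-1/2}` at time level `k`, with zero velocity
(hence zero flux `F`) at the boundary faces. -/
theorem convexity_renormalized_scheme_bound (B : ℝ → ℝ)
    (hconv : ConvexOn ℝ Set.univ B)
    (hdiff : ∀ x : ℝ, DifferentiableAt ℝ B x)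
    (hdiff2 : ∀ x : ℝ, DifferentiableAt ℝ (deriv B) x) :
    (∀ ρ0 ρ1 : ℝ, B ρ1 - B ρ0 ≤ deriv B ρ1 * (ρ1 - ρ0)) ∧
    (∀ (N M : ℕ), 1 ≤ N → ∀ (Δt Δx : ℝ), 0 < Δt → 0 < Δx →
      ∀ (ρ : ℕ → ℕ → ℝ) (u : ℕ → ℕ → ℝ) (F : ℕ → ℕ → ℝ),
      (∀ k i, 0 < ρ k i) →
      (∀ k, u k 0 = 0 ∧ u k N = 0) →
      (∀ k, F k 0 = 0 ∧ F k N = 0) →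
      (∀ k j, 1 ≤ j → j ≤ N - 1 →
        F k j = ρ k (j - 1) * max (u k j) 0 + ρ k j * min (u k j) 0) →
      (∀ k, 1 ≤ k → ∀ i < N,
        (ρ k i - ρ (k - 1) i) / Δt + (F k (i + 1) - F k i) / Δx = 0) →
      ∀ m ≤ M,
        Δx * ∑ i ∈ range N, B (ρ m i)
          ≤ Δx * ∑ i ∈ range N, B (ρ 0 i)
            - Δt * Δx * ∑ k ∈ Finset.Icc 1 m, ∑ i ∈ range N,
                (ρ k i * deriv B (ρ k i) - B (ρ k i))
                  * ((u k (i + 1) - u k i) / Δx)) := by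
  have key := tangent_ineq B hconv hdiff
  refine ⟨key, ?_⟩
  intro N M hN Δt Δx hΔt hΔx ρ u F hρ hu hF hFdef hscheme
  -- the one-step estimate
  have step : ∀ k, 1 ≤ k →
      Δx * ∑ i ∈ range N, B (ρ k i)
        ≤ Δx * ∑ i ∈ range N, B (ρ (k-1) i)
          - Δt * Δx * ∑ i ∈ range N,
              (ρ k i * deriv B (ρ k i) - B (ρ k i)) * ((u k (i+1) - u k i) / Δx) := by
    intro k hk
    -- rewrite the flux term
    have hflux : Δt * Δx * ∑ i ∈ range N,
        (ρ k i * deriv B (ρ k i) - B (ρ k i)) * ((u k (i+1) - u k i) / Δx)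
        = Δt * ∑ i ∈ range N,
            (ρ k i * deriv B (ρ k i) - B (ρ k i)) * (u k (i+1) - u k i) := by
      rw [Finset.mul_sum, Finset.mul_sum]
      refine Finset.sum_congr rfl fun i _ => ?_
      field_simp
    rw [hflux]
    -- from the scheme : ρ k i - ρ (k-1) i = -(Δt/Δx) * (F k (i+1) - F k i)
    have hρdiff : ∀ i < N, ρ k i - ρ (k-1) i = -(Δt/Δx) * (F k (i+1) - F k i) := by
      intro i hi
      have h := hscheme k hk i hi
      field_simp at h ⊢
      linarith
    -- convexity step, summed
    have h1 : Δx * ∑ i ∈ range N, B (ρ k i)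
        ≤ Δx * ∑ i ∈ range N, B (ρ (k-1) i)
          - Δt * ∑ i ∈ range N, deriv B (ρ k i) * (F k (i+1) - F k i) := by
      have hsum : ∑ i ∈ range N, (B (ρ k i) - B (ρ (k-1) i))
          ≤ ∑ i ∈ range N, deriv B (ρ k i) * (ρ k i - ρ (k-1) i) :=
        Finset.sum_le_sum fun i _ => key (ρ (k-1) i) (ρ k i)
      have hsum2 : ∑ i ∈ range N, deriv B (ρ k i) * (ρ k i - ρ (k-1) i)
          = -(Δt/Δx) * ∑ i ∈ range N, deriv B (ρ k i) * (F k (i+1) - F k i) := by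
        rw [Finset.mul_sum]
        refine Finset.sum_congr rfl fun i hi => ?_
        rw [hρdiff i (Finset.mem_range.mp hi)]
        ring
      rw [hsum2] at hsum
      rw [Finset.sum_sub_distrib] at hsum
      have := mul_le_mul_of_nonneg_left hsum (le_of_lt hΔx)
      have hx : Δx * (-(Δt/Δx) * ∑ i ∈ range N, deriv B (ρ k i) * (F k (i+1) - F k i))
          = -(Δt * ∑ i ∈ range N, deriv B (ρ k i) * (F k (i+1) - F k i)) := by
        field_simp
      rw [hx] at this
      rw [mul_sub] at this
      linarith
    -- summation by parts for both sums
    have hb1 : ∑ i ∈ range N, deriv B (ρ k i) * (F k (i+1) - F k i)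
        = - ∑ i ∈ range (N-1), (deriv B (ρ k (i+1)) - deriv B (ρ k i)) * F k (i+1) := by
      have := abel_aux (fun i => deriv B (ρ k i)) (fun i => F k i) (N-1)
      have hN1 : N - 1 + 1 = N := by omega
      rw [hN1] at this
      rw [this, (hF k).1, (hF k).2]
      ring
    have hb2 : ∑ i ∈ range N, (ρ k i * deriv B (ρ k i) - B (ρ k i)) * (u k (i+1) - u k i)
        = - ∑ i ∈ range (N-1), ((ρ k (i+1) * deriv B (ρ k (i+1)) - B (ρ k (i+1)))
            - (ρ k i * deriv B (ρ k i) - B (ρ k i))) * u k (i+1) := by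
      have := abel_aux (fun i => ρ k i * deriv B (ρ k i) - B (ρ k i)) (fun i => u k i) (N-1)
      have hN1 : N - 1 + 1 = N := by omega
      rw [hN1] at this
      rw [this, (hu k).1, (hu k).2]
      ring
    -- termwise dissipation inequality
    have hterm : ∀ i ∈ range (N-1),
        ((ρ k (i+1) * deriv B (ρ k (i+1)) - B (ρ k (i+1)))
            - (ρ k i * deriv B (ρ k i) - B (ρ k i))) * u k (i+1)
          - (deriv B (ρ k (i+1)) - deriv B (ρ k i)) * F k (i+1) ≥ 0 := by
      intro i hi
      have hi' := Finset.mem_range.mp hi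
      have hFi : F k (i+1) = ρ k i * max (u k (i+1)) 0 + ρ k (i+1) * min (u k (i+1)) 0 := by
        have := hFdef k (i+1) (by omega) (by omega)
        simpa using this
      rw [hFi]
      set a := ρ k i with ha
      set c := ρ k (i+1) with hc
      set v := u k (i+1) with hv
      set vp := max v 0 with hvp
      set vm := min v 0 with hvm
      have hvsum : v = vp + vm := by
        rw [hvp, hvm, max_add_min]; ring
      have hvp0 : 0 ≤ vp := le_max_right v 0
      have hvm0 : vm ≤ 0 := min_le_right v 0
      have k1 := key a c
      have k2 := key c a
      have t1 : 0 ≤ vp * (deriv B c * (c - a) - (B c - B a)) :=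
        mul_nonneg hvp0 (by linarith)
      have hbr : deriv B a * (c - a) - (B c - B a) ≤ 0 := by nlinarith [k2]
      have t2 : 0 ≤ vm * (deriv B a * (c - a) - (B c - B a)) := by
        nlinarith [mul_nonneg (neg_nonneg.mpr hvm0) (neg_nonneg.mpr hbr)]
      rw [hvsum]
      nlinarith [t1, t2]
    have hsum3 : ∑ i ∈ range N, (ρ k i * deriv B (ρ k i) - B (ρ k i)) * (u k (i+1) - u k i)
        ≤ ∑ i ∈ range N, deriv B (ρ k i) * (F k (i+1) - F k i) := by
      rw [hb1, hb2, neg_le_neg_iff]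
      apply Finset.sum_le_sum
      intro i hi
      linarith [hterm i hi]
    have := mul_le_mul_of_nonneg_left hsum3 (le_of_lt hΔt)
    linarith
  -- induction on m
  intro m hm
  clear hm
  induction m with
  | zero => simp
  | succ n ih =>
    have hs := step (n+1) (by omega)
    simp only [Nat.add_sub_cancel] at hs
    rw [Finset.sum_Icc_succ_top (by omega : 1 ≤ n + 1)]
    rw [mul_add]
    linarith
end

section
/- Let ρ_i, ρ_{i+1} > 0, let û_i, û_{i+1}, u_{i+1/2} ∈ ℝ, and set Up(ρûu)_{i+1/2} = (ρ_i û_i)u_{i+1/2}^+ + (ρ_{i+1} û_{i+1})u_{i+1/2}^- and Up(ρu)_{i+1/2} = ρ_i u_{i+1/2}^+ + ρ_{i+1} u_{i+1/2}^-. Then Up(ρûu)_{i+1/2}·(û_{i+1} − û_i)/Δx = Up(ρu)_{i+1/2}·(û_{i+1}² − û_i²)/(2Δx) − (Δx/2)·|Up(ρu)_{i+1/2}|·((û_{i+1} − û_i)/Δx)². -/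
/-- Pointwise identity for the upwind momentum convection term tested against the
velocity: with `Up(ρûu) = ρᵢûᵢu⁺ + ρᵢ₊₁ûᵢ₊₁u⁻` and `Up(ρu) = ρᵢu⁺ + ρᵢ₊₁u⁻`,
`Up(ρûu)·(ûᵢ₊₁-ûᵢ)/Δx = Up(ρu)·(ûᵢ₊₁²-ûᵢ²)/(2Δx) - (Δx/2)|Up(ρu)|((ûᵢ₊₁-ûᵢ)/Δx)²`. -/
theorem upwind_convection_energy_identity (Δx : ℝ) (hΔx : 0 < Δx)
    (ρ0 ρ1 : ℝ) (hρ0 : 0 < ρ0) (hρ1 : 0 < ρ1) (v0 v1 u : ℝ) :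
    (ρ0 * v0 * max u 0 + ρ1 * v1 * min u 0) * ((v1 - v0) / Δx)
      = (ρ0 * max u 0 + ρ1 * min u 0) * ((v1 ^ 2 - v0 ^ 2) / (2 * Δx))
        - (Δx / 2) * |ρ0 * max u 0 + ρ1 * min u 0| * ((v1 - v0) / Δx) ^ 2 := by
  have habs : |ρ0 * max u 0 + ρ1 * min u 0| = ρ0 * max u 0 - ρ1 * min u 0 := by
    rcases le_or_gt u 0 with h | h
    · rw [max_eq_right h, min_eq_left h, abs_of_nonpos (by nlinarith)]; ring
    · rw [max_eq_left h.le, min_eq_right h.le, abs_of_nonneg (by nlinarith)]; ring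
  rw [habs]
  field_simp
  ring
end

section
/- Let the discrete Dirichlet Laplacian on a uniform grid of N interior staggered points be Δ_{i+1/2}w = (w_{i-1/2} − 2w_{i+1/2} + w_{i+3/2})/Δx² with w_{-1/2} = w_{N-1/2} = 0, and let the discrete Neumann Laplacian be Δ_i q = (q_{i-1} − 2q_i + q_{i+1})/Δx² with shadow-cell conditions q_N = q_{N-1}, q_{-1} = q_1 (defined on zero-mean sources). Then the duality Δx·Σ_i v_{i+1/2}·∂_{i+1/2}(Δ_i^{-1}[f]) = −Δx·Σ_i ∂_i(Δ_{i+1/2}^{-1}[v])·f_i holds for all admissible v and zero-mean f, where ∂_{i+1/2}g = (g_{i+1} − g_i)/Δx and ∂_i w = (w_{i+1/2} − w_{i-1/2})/Δx. -/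
open Finset

/-- Duality between the inverse discrete Neumann Laplacian and the inverse discrete
Dirichlet Laplacian.  Here `q j` denotes the Neumann cell value `q_{j-1}` (including
the shadow cells `q_{-1} = q 0` and `q_N = q (N+1)`, with shadow-cell conditions
`q_N = q_{N-1}` and `q_{-1} = q_1`), `w j` denotes the face value `w_{j-1/2}` with
Dirichlet conditions `w_{-1/2} = w_{N-1/2} = 0`, `f` is a zero-mean source with
`-Δᵢ q = f`, and `-Δ_{i+1/2} w = v` at interior faces.  Then
`Δx Σᵢ v_{i+1/2}·∂_{i+1/2}(Δᵢ⁻¹[f]) = -Δx Σᵢ ∂ᵢ(Δ_{i+1/2}⁻¹[v])·fᵢ`,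
where `∂_{i+1/2}(Δᵢ⁻¹[f]) = -∂_{i+1/2}q` and `∂ᵢ(Δ_{i+1/2}⁻¹[v]) = -∂ᵢw`. -/
theorem discrete_laplacian_duality (N : ℕ) (hN : 1 ≤ N) (Δx : ℝ) (hΔx : 0 < Δx)
    (f v q w : ℕ → ℝ)
    (hfmean : ∑ i ∈ range N, f i = 0)
    (hq : ∀ i < N, -((q i - 2 * q (i + 1) + q (i + 2)) / Δx ^ 2) = f i)
    (hqN : q (N + 1) = q N) (hqm : q 0 = q 2)
    (hw0 : w 0 = 0) (hwN : w N = 0)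
    (hw : ∀ j, 1 ≤ j → j ≤ N - 1 →
      -((w (j - 1) - 2 * w j + w (j + 1)) / Δx ^ 2) = v j) :
    Δx * ∑ i ∈ range N, v (i + 1) * (-((q (i + 2) - q (i + 1)) / Δx))
      = -(Δx * ∑ i ∈ range N, (-((w (i + 1) - w i) / Δx)) * f i) := by
  have hΔx' : Δx ≠ 0 := ne_of_gt hΔx
  have hΔx2 : Δx ^ 2 ≠ 0 := pow_ne_zero _ hΔx'
  obtain ⟨M, rfl⟩ : ∃ M, N = M + 1 := ⟨N - 1, (Nat.succ_pred_eq_of_pos hN).symm⟩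
  have hbN : q (M + 2) = q (M + 1) := hqN
  -- zero mean forces q 1 = q 0
  have hb0 : q 1 = q 0 := by
    have h1 : ∑ i ∈ range (M + 1), f i
        = ∑ i ∈ range (M + 1),
            (-(((q (i + 1 + 1) - q (i + 1)) - (q (i + 1) - q i)) / Δx ^ 2)) := by
      refine Finset.sum_congr rfl fun i hi => ?_
      rw [← hq i (Finset.mem_range.mp hi)]
      ring
    have h2 : ∑ i ∈ range (M + 1),
        (-(((q (i + 1 + 1) - q (i + 1)) - (q (i + 1) - q i)) / Δx ^ 2))
        = -(((q (M + 1 + 1) - q (M + 1)) - (q 1 - q 0)) / Δx ^ 2) := by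
      rw [Finset.sum_neg_distrib, ← Finset.sum_div,
        Finset.sum_range_sub (fun i => q (i + 1) - q i) (M + 1)]
    have h3 : -(((q (M + 1 + 1) - q (M + 1)) - (q 1 - q 0)) / Δx ^ 2) = 0 := by
      rw [← h2, ← h1, hfmean]
    have h4 : q (M + 1 + 1) = q (M + 1) := hqN
    field_simp at h3
    linarith
  -- Abel summation / telescoping key identity
  have tele : ∑ i ∈ range (M + 1),
      ((w (i + 1 + 1) - w (i + 1)) * (q (i + 1 + 1) - q (i + 1))
        - (w (i + 1) - w i) * (q (i + 1) - q i))
      = (w (M + 1 + 1) - w (M + 1)) * (q (M + 1 + 1) - q (M + 1))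
        - (w (0 + 1) - w 0) * (q (0 + 1) - q 0) :=
    Finset.sum_range_sub (fun i => (w (i + 1) - w i) * (q (i + 1) - q i)) (M + 1)
  have key : (∑ i ∈ range M, (w i - 2 * w (i + 1) + w (i + 2)) * (q (i + 2) - q (i + 1)))
      + (∑ i ∈ range (M + 1), (w (i + 1) - w i) * (q i - 2 * q (i + 1) + q (i + 2))) = 0 := by
    have h2 : ∑ i ∈ range (M + 1),
        ((w i - 2 * w (i + 1) + w (i + 2)) * (q (i + 2) - q (i + 1))
          + (w (i + 1) - w i) * (q i - 2 * q (i + 1) + q (i + 2))) = 0 := by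
      have htele := tele
      rw [hbN, hb0] at htele
      calc ∑ i ∈ range (M + 1),
            ((w i - 2 * w (i + 1) + w (i + 2)) * (q (i + 2) - q (i + 1))
              + (w (i + 1) - w i) * (q i - 2 * q (i + 1) + q (i + 2)))
          = ∑ i ∈ range (M + 1),
            ((w (i + 1 + 1) - w (i + 1)) * (q (i + 1 + 1) - q (i + 1))
              - (w (i + 1) - w i) * (q (i + 1) - q i)) := by
            refine Finset.sum_congr rfl fun i hi => ?_
            ring
        _ = 0 := by rw [htele]; ring
    have h3 : ∑ i ∈ range (M + 1),
        (w i - 2 * w (i + 1) + w (i + 2)) * (q (i + 2) - q (i + 1))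
        = ∑ i ∈ range M, (w i - 2 * w (i + 1) + w (i + 2)) * (q (i + 2) - q (i + 1)) := by
      rw [Finset.sum_range_succ, hbN]
      simp
    rw [Finset.sum_add_distrib, h3] at h2
    exact h2
  -- rewrite the left-hand side
  have hL : Δx * ∑ i ∈ range (M + 1), v (i + 1) * (-((q (i + 2) - q (i + 1)) / Δx))
      = (∑ i ∈ range M, (w i - 2 * w (i + 1) + w (i + 2)) * (q (i + 2) - q (i + 1))) / Δx ^ 2 := by
    rw [Finset.sum_range_succ, hbN]
    simp only [sub_self, zero_div, neg_zero, mul_zero, add_zero]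
    rw [Finset.mul_sum, Finset.sum_div]
    refine Finset.sum_congr rfl fun i hi => ?_
    have hi' : i < M := Finset.mem_range.mp hi
    rw [← hw (i + 1) (by omega) (by omega)]
    simp only [Nat.add_sub_cancel]
    field_simp
  -- rewrite the right-hand side
  have hR : Δx * ∑ i ∈ range (M + 1), (-((w (i + 1) - w i) / Δx)) * f i
      = (∑ i ∈ range (M + 1),
          (w (i + 1) - w i) * (q i - 2 * q (i + 1) + q (i + 2))) / Δx ^ 2 := by
    rw [Finset.mul_sum, Finset.sum_div]
    refine Finset.sum_congr rfl fun i hi => ?_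
    rw [← hq i (Finset.mem_range.mp hi)]
    field_simp
  rw [hL, hR]
  rw [show (∑ i ∈ range M, (w i - 2 * w (i + 1) + w (i + 2)) * (q (i + 2) - q (i + 1)))
      = -(∑ i ∈ range (M + 1), (w (i + 1) - w i) * (q i - 2 * q (i + 1) + q (i + 2)))
    from by linarith [key]]
  rw [neg_div]
end
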